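/- If φ is differentiable on (0,∞) with φ' > 0, then the hash supply function H(P) is differentiable on (0,∞) with H'(P) = (B+Φ)/(φ(H(P)) + H(P)·φ'(H(P))), and in particular H'(P) > 0 for all P > 0. -/

import Mathlib

/-- If `φ` is differentiable on `(0,∞)` with `φ' > 0`, then the hash
supply function `H(P)` is differentiable on `(0,∞)` with
`H'(P) = (B+Φ)/(φ(H(P)) + H(P)·φ'(H(P)))`, and in particular `H'(P) > 0` for all `P > 0`. -/
theorem hash_supply_hasDerivAt
    (φ : ℝ → ℝ)
    (hφc : ContinuousOn φ (Set.Ici 0))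
    (hφm : StrictMonoOn φ (Set.Ici 0))
    (hφ0 : 0 ≤ φ 0)
    (hφtop : Filter.Tendsto (fun H : ℝ => H * φ H) Filter.atTop Filter.atTop)
    (φ' : ℝ → ℝ)
    (hφd : ∀ x : ℝ, 0 < x → HasDerivAt φ (φ' x) x)
    (hφ'pos : ∀ x : ℝ, 0 < x → 0 < φ' x)
    (B Φ : ℝ) (hB : 0 < B) (hΦ : 0 ≤ Φ)
    (Hs : ℝ → ℝ)
    (hHs : ∀ P : ℝ, 0 < P → 0 < Hs P ∧ Hs P * φ (Hs P) = P * (B + Φ)) :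
    ∀ P : ℝ, 0 < P →
      HasDerivAt Hs ((B + Φ) / (φ (Hs P) + Hs P * φ' (Hs P))) P ∧
      0 < (B + Φ) / (φ (Hs P) + Hs P * φ' (Hs P)) := by
  have hBΦ : 0 < B + Φ := by linarith
  -- φ is positive on (0,∞)
  have hφpos : ∀ x : ℝ, 0 < x → 0 < φ x := fun x hx =>
    lt_of_le_of_lt hφ0 (hφm Set.self_mem_Ici (Set.mem_Ici.mpr (le_of_lt hx)) hx)
  -- g(H) := H * φ(H) is strictly monotone on (0,∞)
  have hgm : StrictMonoOn (fun H : ℝ => H * φ H) (Set.Ioi 0) := by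
    intro a ha b hb hab
    have ha' : (0:ℝ) ≤ a := le_of_lt ha
    have hφab : φ a ≤ φ b := le_of_lt (hφm ha' (Set.mem_Ici.mpr (le_of_lt hb)) hab)
    have hφb : 0 < φ b := hφpos b hb
    calc a * φ a ≤ a * φ b := by nlinarith
      _ < b * φ b := by nlinarith
  -- Hs is strictly monotone on (0,∞)
  have hHsm : StrictMonoOn Hs (Set.Ioi 0) := by
    intro P hP Q hQ hPQ
    have h1 := hHs P hP
    have h2 := hHs Q hQ
    by_contra h
    push_neg at h
    have : Hs Q * φ (Hs Q) ≤ Hs P * φ (Hs P) := by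
      rcases eq_or_lt_of_le h with heq | hlt
      · rw [heq]
      · exact le_of_lt (hgm h2.1 h1.1 hlt)
    rw [h1.2, h2.2] at this
    nlinarith
  -- Hs is surjective onto (0,∞)
  have hHssurj : Set.Ioi (0:ℝ) ⊆ Hs '' Set.Ioi 0 := by
    intro H hH
    have hH' : (0:ℝ) < H := hH
    have hP : 0 < H * φ H / (B + Φ) :=
      div_pos (mul_pos hH' (hφpos H hH')) hBΦ
    refine ⟨H * φ H / (B + Φ), hP, ?_⟩
    have h1 := hHs _ hP
    have heq : Hs (H * φ H / (B + Φ)) * φ (Hs (H * φ H / (B + Φ))) = H * φ H := by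
      rw [h1.2]; field_simp
    exact hgm.injOn h1.1 hH (by simpa using heq)
  intro P hP
  have h1 := hHs P hP
  have hHsP : 0 < Hs P := h1.1
  -- continuity of Hs at P
  have hcont : ContinuousAt Hs P := by
    apply hHsm.continuousAt_of_image_mem_nhds (Ioi_mem_nhds hP)
    exact Filter.mem_of_superset (Ioi_mem_nhds hHsP) hHssurj
  -- derivative of f(H) := H * φ(H) / (B+Φ) at Hs P
  set f : ℝ → ℝ := fun H => H * φ H / (B + Φ) with hf
  have hfd : HasDerivAt f ((φ (Hs P) + Hs P * φ' (Hs P)) / (B + Φ)) (Hs P) := by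
    have := ((hasDerivAt_id (Hs P)).mul (hφd _ hHsP)).div_const (B + Φ)
    simpa [one_mul, mul_comm] using this
  have hden : 0 < φ (Hs P) + Hs P * φ' (Hs P) := by
    have := hφpos _ hHsP
    have := hφ'pos _ hHsP
    nlinarith
  have hf' : (φ (Hs P) + Hs P * φ' (Hs P)) / (B + Φ) ≠ 0 :=
    ne_of_gt (div_pos hden hBΦ)
  have hfg : ∀ᶠ y in nhds P, f (Hs y) = y := by
    filter_upwards [Ioi_mem_nhds hP] with y hy
    have h2 := hHs y hy
    simp only [hf, h2.2]
    field_simp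
  have hderiv := HasDerivAt.of_local_left_inverse hcont hfd hf' hfg
  have hinv : ((φ (Hs P) + Hs P * φ' (Hs P)) / (B + Φ))⁻¹
      = (B + Φ) / (φ (Hs P) + Hs P * φ' (Hs P)) := by
    rw [inv_div]
  rw [hinv] at hderiv
  exact ⟨hderiv, div_pos hBΦ hden⟩
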